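/- Let g₀ be the log-logistic density with parameter γ > 1, g₀(t) = γ t^{γ−1}/(1+t^γ)², with survival function Ḡ₀(t) = 1/(1+t^γ) and mean μ. Then the Fisher information for scale of the current-duration density f₂(x) = Ḡ₀(x)/μ equals (γ−1)/2. -/

import Mathlib

open MeasureTheory Set Real Filter Topology

namespace Stmt14Aux

variable {γ : ℝ}

/-- generic integrability: bounded near 0, dominated by `C x^(-γ)` at infinity. -/
lemma tail_integrable (hγ : 1 < γ) {C : ℝ} {φ : ℝ → ℝ} (hm : Measurable φ)
    (h01 : ∀ x ∈ Ioc (0:ℝ) 1, |φ x| ≤ C)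
    (h1 : ∀ x ∈ Ioi (1:ℝ), |φ x| ≤ C * x ^ (-γ)) :
    IntegrableOn φ (Ioi (0:ℝ)) := by
  have hsplit : Ioi (0:ℝ) = Ioc 0 1 ∪ Ioi 1 := (Ioc_union_Ioi_eq_Ioi zero_le_one).symm
  rw [hsplit]
  refine IntegrableOn.union ?_ ?_
  · refine Measure.integrableOn_of_bounded (M := C) (by simp) hm.aestronglyMeasurable ?_
    exact (ae_restrict_iff' measurableSet_Ioc).2 (ae_of_all _ fun x hx => by
      simpa [Real.norm_eq_abs] using h01 x hx)
  · refine Integrable.mono'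
      ((integrableOn_Ioi_rpow_of_lt (a := -γ) (by linarith) one_pos).const_mul C)
      hm.aestronglyMeasurable.restrict ?_
    exact (ae_restrict_iff' measurableSet_Ioi).2 (ae_of_all _ fun x hx => by
      simpa [Real.norm_eq_abs] using h1 x hx)

lemma h1_meas : Measurable fun x : ℝ => γ * x ^ γ / (1 + x ^ γ) ^ 2 := by
  have h : Measurable fun x : ℝ => x ^ γ := measurable_id.pow_const _
  exact (h.const_mul γ).div ((h.const_add 1).pow_const 2)

lemma h2_meas : Measurable fun x : ℝ => (1 + (1 - γ) * x ^ γ) ^ 2 / (1 + x ^ γ) ^ 3 := by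
  have h : Measurable fun x : ℝ => x ^ γ := measurable_id.pow_const _
  exact (((h.const_mul (1 - γ)).const_add 1).pow_const 2).div ((h.const_add 1).pow_const 3)

lemma h1_int (hγ : 1 < γ) :
    IntegrableOn (fun x : ℝ => γ * x ^ γ / (1 + x ^ γ) ^ 2) (Ioi (0:ℝ)) := by
  have hγ0 : (0:ℝ) < γ := by linarith
  refine tail_integrable hγ (C := γ ^ 2) h1_meas ?_ ?_
  · intro x hx
    have ht0 : 0 < x ^ γ := rpow_pos_of_pos hx.1 γ
    have ht1 : x ^ γ ≤ 1 := rpow_le_one hx.1.le hx.2 hγ0.le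
    rw [abs_of_nonneg (by positivity)]
    rw [div_le_iff₀ (by positivity)]
    nlinarith [sq_nonneg (x ^ γ)]
  · intro x hx
    have hx0 : (0:ℝ) < x := lt_trans one_pos hx
    have ht1 : 1 ≤ x ^ γ := one_le_rpow hx.le hγ0.le
    have ht0 : 0 < x ^ γ := by linarith
    have hneg : x ^ (-γ) = (x ^ γ)⁻¹ := rpow_neg hx0.le γ
    rw [abs_of_nonneg (by positivity), hneg, ← div_eq_mul_inv,
      div_le_div_iff₀ (by positivity) ht0]
    have hone : (x ^ γ) ^ 2 ≤ (1 + x ^ γ) ^ 2 := by nlinarith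
    nlinarith [mul_le_mul_of_nonneg_left hone hγ0.le, sq_nonneg (1 + x ^ γ),
      mul_nonneg (by nlinarith : (0:ℝ) ≤ γ ^ 2 - γ) (sq_nonneg (1 + x ^ γ))]

lemma h2_int (hγ : 1 < γ) :
    IntegrableOn (fun x : ℝ => (1 + (1 - γ) * x ^ γ) ^ 2 / (1 + x ^ γ) ^ 3) (Ioi (0:ℝ)) := by
  have hγ0 : (0:ℝ) < γ := by linarith
  refine tail_integrable hγ (C := γ ^ 2) h2_meas ?_ ?_
  · intro x hx
    set t := x ^ γ with hts
    have ht0 : 0 < t := rpow_pos_of_pos hx.1 γ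
    have ht1 : t ≤ 1 := rpow_le_one hx.1.le hx.2 hγ0.le
    rw [abs_of_nonneg (by positivity)]
    rw [div_le_iff₀ (by positivity)]
    have hv1 : 1 + (1 - γ) * t ≤ 1 := by nlinarith
    have hv2 : -γ ≤ 1 + (1 - γ) * t := by nlinarith
    have hsq : (1 + (1 - γ) * t) ^ 2 ≤ γ ^ 2 := by nlinarith
    have hp : (1:ℝ) ≤ (1 + t) ^ 3 := by
      nlinarith [sq_nonneg t, mul_nonneg (mul_nonneg ht0.le ht0.le) ht0.le]
    nlinarith [hsq, hp, sq_nonneg γ, mul_le_mul_of_nonneg_left hp (sq_nonneg γ)]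
  · intro x hx
    have hx0 : (0:ℝ) < x := lt_trans one_pos hx
    set t := x ^ γ with hts
    have ht1 : 1 ≤ t := one_le_rpow hx.le hγ0.le
    have ht0 : 0 < t := by linarith
    have hneg : x ^ (-γ) = t⁻¹ := rpow_neg hx0.le γ
    rw [abs_of_nonneg (by positivity), hneg, ← div_eq_mul_inv,
      div_le_div_iff₀ (by positivity) ht0]
    -- (1+(1-γ)t)^2 * t ≤ γ^2 (1+t)^3 with t ≥ 1
    have hv1 : 1 + (1 - γ) * t ≤ γ * t := by nlinarith
    have hv2 : -(γ * t) ≤ 1 + (1 - γ) * t := by nlinarith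
    have hsq : (1 + (1 - γ) * t) ^ 2 ≤ (γ * t) ^ 2 := by nlinarith
    have hcube : t ^ 3 ≤ (1 + t) ^ 3 := by
      nlinarith [sq_nonneg t, ht0]
    have hstep : (γ * t) ^ 2 * t ≤ γ ^ 2 * (1 + t) ^ 3 := by
      nlinarith [mul_le_mul_of_nonneg_left hcube (sq_nonneg γ)]
    exact le_trans (mul_le_mul_of_nonneg_right hsq ht0.le) hstep

/-- the FTC identity: the integral of `h₂ - (γ-1)/2 * h₁` vanishes. -/
lemma ftc_zero (hγ : 1 < γ) :
    ∫ x in Ioi (0:ℝ),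
      ((1 + (1 - γ) * x ^ γ) ^ 2 / (1 + x ^ γ) ^ 3
        - (γ - 1) / 2 * (γ * x ^ γ / (1 + x ^ γ) ^ 2)) = 0 := by
  have hγ0 : (0:ℝ) < γ := by linarith
  set c : ℝ := 1 - γ / 2 with hc
  set F : ℝ → ℝ := fun x => x * (1 + c * x ^ γ) / (1 + x ^ γ) ^ 2 with hF
  have hF0 : F 0 = 0 := by simp [hF, zero_rpow hγ0.ne']
  have hcont : ContinuousWithinAt F (Ici (0:ℝ)) 0 := by
    have hrc : ContinuousAt (fun x : ℝ => x ^ γ) 0 :=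
      continuousAt_rpow_const 0 γ (Or.inr hγ0.le)
    have hden : ((1:ℝ) + (0:ℝ) ^ γ) ^ 2 ≠ 0 := by
      simp [zero_rpow hγ0.ne']
    exact ((continuousAt_id.mul (continuousAt_const.add
      (continuousAt_const.mul hrc))).div ((continuousAt_const.add hrc).pow 2)
      hden).continuousWithinAt
  have hderivF : ∀ x ∈ Ioi (0:ℝ), HasDerivAt F
      ((1 + (1 - γ) * x ^ γ) ^ 2 / (1 + x ^ γ) ^ 3
        - (γ - 1) / 2 * (γ * x ^ γ / (1 + x ^ γ) ^ 2)) x := by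
    intro x hx
    have hx0 : (0:ℝ) < x := hx
    have hu : HasDerivAt (fun x : ℝ => x ^ γ) (γ * x ^ (γ - 1)) x :=
      hasDerivAt_rpow_const (Or.inl hx0.ne')
    have ht0 : 0 < x ^ γ := rpow_pos_of_pos hx0 γ
    have hne : ((1:ℝ) + x ^ γ) ^ 2 ≠ 0 := by positivity
    have hnum : HasDerivAt (fun x : ℝ => x * (1 + c * x ^ γ))
        (1 * (1 + c * x ^ γ) + x * (c * (γ * x ^ (γ - 1)))) x :=
      (hasDerivAt_id x).mul ((hu.const_mul c).const_add 1)
    have hden : HasDerivAt (fun x : ℝ => (1 + x ^ γ) ^ 2)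
        (2 * (1 + x ^ γ) ^ 1 * (γ * x ^ (γ - 1))) x := (hu.const_add 1).pow 2
    have hd := hnum.div hden hne
    refine hd.congr_deriv ?_
    symm
    have hkey : x ^ γ = x ^ (γ - 1) * x := by
      rw [← rpow_add_one hx0.ne' (γ - 1)]; ring_nf
    have hpos : (0:ℝ) < 1 + x ^ γ := by linarith
    field_simp
    rw [hkey]
    ring
  have hint : IntegrableOn (fun x : ℝ =>
      (1 + (1 - γ) * x ^ γ) ^ 2 / (1 + x ^ γ) ^ 3
        - (γ - 1) / 2 * (γ * x ^ γ / (1 + x ^ γ) ^ 2)) (Ioi (0:ℝ)) :=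
    (h2_int hγ).sub ((h1_int hγ).const_mul ((γ - 1) / 2))
  have htends : Tendsto F atTop (𝓝 0) := by
    have h1 : Tendsto (fun x : ℝ => x ^ (1 - γ)) atTop (𝓝 0) := by
      have := tendsto_rpow_neg_atTop (y := γ - 1) (by linarith)
      simpa [neg_sub] using this
    have h2 : Tendsto (fun x : ℝ => x ^ (-γ)) atTop (𝓝 0) :=
      tendsto_rpow_neg_atTop hγ0
    have h3 : Tendsto (fun x : ℝ => x ^ (1 - γ) * ((x ^ (-γ) + c) / (x ^ (-γ) + 1) ^ 2))
        atTop (𝓝 (0 * ((0 + c) / (0 + 1) ^ 2))) := by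
      refine h1.mul (Tendsto.div ((h2.add tendsto_const_nhds))
        (((h2.add tendsto_const_nhds)).pow 2) (by norm_num))
    rw [show (0:ℝ) * ((0 + c) / (0 + 1) ^ 2) = 0 by ring] at h3
    refine Tendsto.congr' ?_ h3
    filter_upwards [eventually_gt_atTop (0:ℝ)] with x hx0
    have ht0 : 0 < x ^ γ := rpow_pos_of_pos hx0 γ
    have hneg : x ^ (-γ) = (x ^ γ)⁻¹ := rpow_neg hx0.le γ
    have h1γ : x ^ (1 - γ) = x * (x ^ γ)⁻¹ := by
      rw [show (1 - γ) = 1 + -γ by ring, rpow_add hx0, rpow_one, rpow_neg hx0.le]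
    rw [hF, hneg, h1γ]
    have hpos : (0:ℝ) < 1 + x ^ γ := by linarith
    field_simp
  have := integral_Ioi_of_hasDerivAt_of_tendsto hcont hderivF hint htends
  rw [this, hF0, sub_zero]

end Stmt14Aux

open Stmt14Aux

/-- For the log-logistic density with `γ > 1` and survival function `Ḡ₀(t) = 1/(1+t^γ)`,
the Fisher information for scale of the current-duration density `f₂(x) = Ḡ₀(x)/μ`
equals `(γ−1)/2`. -/
theorem stmt14 (γ : ℝ) (hγ : 1 < γ)
    (g₀ : ℝ → ℝ) (hg₀ : ∀ t > (0:ℝ), g₀ t = γ * t ^ (γ - 1) / (1 + t ^ γ) ^ 2)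
    (μ : ℝ) (hμ : μ = ∫ t in Ioi (0:ℝ), t * g₀ t)
    (f₂ f₂' : ℝ → ℝ) (hf₂ : ∀ x, f₂ x = (1 / (1 + x ^ γ)) / μ)
    (hderiv : ∀ x ∈ Ioi (0:ℝ), HasDerivAt f₂ (f₂' x) x) :
    ∫ x in Ioi (0:ℝ), (1 + x * f₂' x / f₂ x) ^ 2 * f₂ x = (γ - 1) / 2 := by
  have hγ0 : (0:ℝ) < γ := by linarith
  -- rewrite μ as integral of h₁
  have hcongr : (∫ t in Ioi (0:ℝ), t * g₀ t)
      = ∫ t in Ioi (0:ℝ), γ * t ^ γ / (1 + t ^ γ) ^ 2 := by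
    refine setIntegral_congr_fun measurableSet_Ioi fun t ht => ?_
    have ht0 : (0:ℝ) < t := ht
    have hkey : t ^ γ = t ^ (γ - 1) * t := by
      rw [← rpow_add_one ht0.ne' (γ - 1)]; ring_nf
    rw [hg₀ t ht0, hkey]; ring
  have hμ' : μ = ∫ t in Ioi (0:ℝ), γ * t ^ γ / (1 + t ^ γ) ^ 2 := by
    rw [hμ, hcongr]
  -- μ > 0
  have hμpos : 0 < μ := by
    rw [hμ']
    have hnn : 0 ≤ᵐ[volume.restrict (Ioi (0:ℝ))]
        fun t : ℝ => γ * t ^ γ / (1 + t ^ γ) ^ 2 := by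
      refine (ae_restrict_iff' measurableSet_Ioi).2 (ae_of_all _ fun t ht => ?_)
      have ht0 : 0 < t ^ γ := rpow_pos_of_pos ht γ
      positivity
    rw [setIntegral_pos_iff_support_of_nonneg_ae hnn (h1_int hγ)]
    have hsub : Ioi (0:ℝ) ⊆ Function.support (fun t : ℝ => γ * t ^ γ / (1 + t ^ γ) ^ 2) := by
      intro t ht
      have ht0 : 0 < t ^ γ := rpow_pos_of_pos ht γ
      have : 0 < γ * t ^ γ / (1 + t ^ γ) ^ 2 := by positivity
      exact fun h => absurd h this.ne'
    have : Ioi (0:ℝ) ⊆ Function.support (fun t : ℝ => γ * t ^ γ / (1 + t ^ γ) ^ 2)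
        ∩ Ioi 0 := fun t ht => ⟨hsub ht, ht⟩
    calc (0 : ENNReal) < volume (Ioi (0:ℝ)) := by simp
    _ ≤ _ := measure_mono this
  have hμne : μ ≠ 0 := hμpos.ne'
  -- identify the integrand on Ioi 0
  have hpt : ∀ x ∈ Ioi (0:ℝ), (1 + x * f₂' x / f₂ x) ^ 2 * f₂ x
      = ((1 + (1 - γ) * x ^ γ) ^ 2 / (1 + x ^ γ) ^ 3) / μ := by
    intro x hx
    have hx0 : (0:ℝ) < x := hx
    have ht0 : 0 < x ^ γ := rpow_pos_of_pos hx0 γ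
    have hpos : (0:ℝ) < 1 + x ^ γ := by linarith
    have hu : HasDerivAt (fun x : ℝ => x ^ γ) (γ * x ^ (γ - 1)) x :=
      hasDerivAt_rpow_const (Or.inl hx0.ne')
    have hfun : f₂ = fun x => (1 + x ^ γ)⁻¹ * μ⁻¹ := by
      funext y; rw [hf₂ y, div_div, one_div, mul_inv]
    have hD : HasDerivAt f₂ ((-(γ * x ^ (γ - 1)) / (1 + x ^ γ) ^ 2) * μ⁻¹) x := by
      rw [hfun]
      exact ((hu.const_add 1).inv hpos.ne').mul_const μ⁻¹
    have hf₂'x : f₂' x = (-(γ * x ^ (γ - 1)) / (1 + x ^ γ) ^ 2) * μ⁻¹ :=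
      (hderiv x hx).unique hD
    have hkey : x ^ γ = x ^ (γ - 1) * x := by
      rw [← rpow_add_one hx0.ne' (γ - 1)]; ring_nf
    rw [hf₂'x, hf₂ x]
    field_simp
    rw [hkey]
    ring
  rw [setIntegral_congr_fun measurableSet_Ioi hpt]
  -- now compute the integral
  have hsum : ∀ x : ℝ, (1 + (1 - γ) * x ^ γ) ^ 2 / (1 + x ^ γ) ^ 3
      = ((1 + (1 - γ) * x ^ γ) ^ 2 / (1 + x ^ γ) ^ 3
          - (γ - 1) / 2 * (γ * x ^ γ / (1 + x ^ γ) ^ 2))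
        + (γ - 1) / 2 * (γ * x ^ γ / (1 + x ^ γ) ^ 2) := fun x => by ring
  have hintφ : IntegrableOn (fun x : ℝ =>
      (1 + (1 - γ) * x ^ γ) ^ 2 / (1 + x ^ γ) ^ 3
        - (γ - 1) / 2 * (γ * x ^ γ / (1 + x ^ γ) ^ 2)) (Ioi (0:ℝ)) :=
    (h2_int hγ).sub ((h1_int hγ).const_mul ((γ - 1) / 2))
  calc ∫ x in Ioi (0:ℝ), ((1 + (1 - γ) * x ^ γ) ^ 2 / (1 + x ^ γ) ^ 3) / μ
      = (∫ x in Ioi (0:ℝ), (1 + (1 - γ) * x ^ γ) ^ 2 / (1 + x ^ γ) ^ 3) / μ := by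
        rw [integral_div]
    _ = ((∫ x in Ioi (0:ℝ),
          ((1 + (1 - γ) * x ^ γ) ^ 2 / (1 + x ^ γ) ^ 3
            - (γ - 1) / 2 * (γ * x ^ γ / (1 + x ^ γ) ^ 2)))
        + ∫ x in Ioi (0:ℝ), (γ - 1) / 2 * (γ * x ^ γ / (1 + x ^ γ) ^ 2)) / μ := by
        rw [← integral_add hintφ ((h1_int hγ).const_mul ((γ - 1) / 2))]
        congr 1
        exact setIntegral_congr_fun measurableSet_Ioi fun x _ => hsum x
    _ = (0 + (γ - 1) / 2 * μ) / μ := by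
        rw [ftc_zero hγ, integral_const_mul, ← hμ']
    _ = (γ - 1) / 2 := by field_simp; ring
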